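/- Let Ω be a Hausdorff space with Borel σ-algebra 𝓕, B_b the space of bounded Borel measurable functions f : Ω → ℝ, and C_b the space of bounded continuous functions. Let φ : B_b → ℝ be a positive linear functional satisfying condition (C). Then there exists a regular finite measure μ ∈ ca⁺_r(𝓕) such that φ(f) = ⟨f,μ⟩ for all f ∈ C_b. -/

import Mathlib

open MeasureTheory Filter Topology Set

variable {Ω : Type*} [TopologicalSpace Ω] [MeasurableSpace Ω] [BorelSpace Ω]

/-- Bounded Borel measurable real-valued functions. -/
def Bb (Ω : Type*) [TopologicalSpace Ω] [MeasurableSpace Ω] : Set (Ω → ℝ) :=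
  {f | Measurable f ∧ ∃ M : ℝ, ∀ ω, |f ω| ≤ M}

/-- Bounded continuous real-valued functions. -/
def Cb (Ω : Type*) [TopologicalSpace Ω] : Set (Ω → ℝ) :=
  {f | Continuous f ∧ ∃ M : ℝ, ∀ ω, |f ω| ≤ M}

/-- ca⁺_r(𝓕): regular finite measures on the Borel σ-algebra. -/
def caReg (Ω : Type*) [TopologicalSpace Ω] [MeasurableSpace Ω] : Set (Measure Ω) :=
  {μ | IsFiniteMeasure μ ∧ ∀ A : Set Ω, MeasurableSet A →
    μ A = ⨆ B ∈ {B : Set Ω | MeasurableSet B ∧ IsClosed B ∧ IsCompact B ∧ B ⊆ A}, μ B}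

/-- Condition (C) for a real-valued functional on B_b. -/
def CondCR (φ : (Ω → ℝ) → ℝ) : Prop :=
  ∃ K : ℕ → Set Ω, (∀ n, IsCompact (K n)) ∧ (∀ n, K n ⊆ K (n + 1)) ∧
    ∀ (fn : ℕ → Ω → ℝ) (f : Ω → ℝ), (∀ n, fn n ∈ Bb Ω) → f ∈ Bb Ω →
      (∀ n ω, fn n ω ≤ fn (n + 1) ω) →
      (∀ m n, m ≤ n → ∀ ω ∈ K m, fn n ω = f ω) →
      (Monotone fun n => φ (fn n)) ∧ Tendsto (fun n => φ (fn n)) atTop (𝓝 (φ f))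

namespace Stmt12Aux

lemma bb_const (c : ℝ) : (fun _ : Ω => c) ∈ Bb Ω :=
  ⟨measurable_const, |c|, fun _ => le_rfl⟩

lemma bb_add {f g : Ω → ℝ} (hf : f ∈ Bb Ω) (hg : g ∈ Bb Ω) : f + g ∈ Bb Ω := by
  obtain ⟨hfm, Mf, hMf⟩ := hf
  obtain ⟨hgm, Mg, hMg⟩ := hg
  exact ⟨hfm.add hgm, Mf + Mg, fun ω =>
    (abs_add_le _ _).trans (add_le_add (hMf ω) (hMg ω))⟩

lemma bb_smul (c : ℝ) {f : Ω → ℝ} (hf : f ∈ Bb Ω) : c • f ∈ Bb Ω := by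
  obtain ⟨hfm, Mf, hMf⟩ := hf
  refine ⟨hfm.const_smul c, |c| * Mf, fun ω => ?_⟩
  have : |c • f ω| = |c| * |f ω| := by simp [abs_mul]
  rw [show (c • f) ω = c • f ω from rfl, this]
  exact mul_le_mul_of_nonneg_left (hMf ω) (abs_nonneg c)

lemma bb_sub {f g : Ω → ℝ} (hf : f ∈ Bb Ω) (hg : g ∈ Bb Ω) : f - g ∈ Bb Ω := by
  have : f - g = f + (-1 : ℝ) • g := by funext ω; simp; ring
  rw [this]; exact bb_add hf (bb_smul _ hg)

lemma bb_indicator {f : Ω → ℝ} (hf : f ∈ Bb Ω) {A : Set Ω} (hA : MeasurableSet A) :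
    A.indicator f ∈ Bb Ω := by
  obtain ⟨hfm, Mf, hMf⟩ := hf
  refine ⟨hfm.indicator hA, max Mf 0, fun ω => ?_⟩
  by_cases h : ω ∈ A
  · rw [Set.indicator_of_mem h]; exact (hMf ω).trans (le_max_left _ _)
  · rw [Set.indicator_of_notMem h]; simpa using le_max_right Mf 0

lemma bb_sum {ι : Type*} (s : Finset ι) (g : ι → Ω → ℝ) (hg : ∀ i ∈ s, g i ∈ Bb Ω) :
    (∑ i ∈ s, g i) ∈ Bb Ω := by
  classical
  induction s using Finset.cons_induction with
  | empty => rw [Finset.sum_empty]; exact bb_const (Ω := Ω) 0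
  | cons a s ha ih =>
    rw [Finset.sum_cons]
    exact bb_add (hg a (Finset.mem_cons_self _ _))
      (ih fun i hi => hg i (Finset.mem_cons_of_mem hi))

variable {φ : (Ω → ℝ) → ℝ}

section phi

variable (hadd : ∀ f ∈ Bb Ω, ∀ g ∈ Bb Ω, φ (f + g) = φ f + φ g)
  (hsmul : ∀ c : ℝ, ∀ f ∈ Bb Ω, φ (c • f) = c * φ f)
  (hpos : ∀ f ∈ Bb Ω, (∀ ω, 0 ≤ f ω) → 0 ≤ φ f)

include hsmul in
lemma phi_zero : φ 0 = 0 := by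
  have := hsmul 0 (fun _ => (0:ℝ)) (bb_const 0)
  simpa using this

include hadd hpos in
lemma phi_mono {f g : Ω → ℝ} (hf : f ∈ Bb Ω) (hg : g ∈ Bb Ω)
    (hle : ∀ ω, f ω ≤ g ω) : φ f ≤ φ g := by
  have h1 : g - f ∈ Bb Ω := bb_sub hg hf
  have h2 : φ (f + (g - f)) = φ f + φ (g - f) := hadd f hf _ h1
  have h3 : f + (g - f) = g := by funext ω; simp
  rw [h3] at h2
  have h4 : 0 ≤ φ (g - f) := hpos _ h1 fun ω => by simpa using hle ω
  linarith

include hadd hsmul in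
lemma phi_sum {ι : Type*} (s : Finset ι) (g : ι → Ω → ℝ) (hg : ∀ i ∈ s, g i ∈ Bb Ω) :
    φ (∑ i ∈ s, g i) = ∑ i ∈ s, φ (g i) := by
  classical
  induction s using Finset.cons_induction with
  | empty => simpa using phi_zero hsmul
  | cons a s ha ih =>
    rw [Finset.sum_cons, Finset.sum_cons,
      hadd _ (hg a (Finset.mem_cons_self _ _)) _
        (bb_sum s g fun i hi => hg i (Finset.mem_cons_of_mem hi)),
      ih fun i hi => hg i (Finset.mem_cons_of_mem hi)]

/-- admissible functions for a set `K`. -/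
def adm (K : Set Ω) : Set (Ω → ℝ) :=
  {f | f ∈ Bb Ω ∧ (∀ ω, 0 ≤ f ω) ∧ ∀ ω ∈ K, 1 ≤ f ω}

lemma one_mem_adm (K : Set Ω) : (fun _ : Ω => (1:ℝ)) ∈ adm K :=
  ⟨bb_const 1, fun _ => zero_le_one, fun _ _ => le_rfl⟩

/-- The content function. -/
noncomputable def philam (φ : (Ω → ℝ) → ℝ) (K : Set Ω) : ℝ :=
  sInf (φ '' adm K)

lemma philam_img_nonempty (K : Set Ω) : (φ '' adm K).Nonempty :=
  ⟨_, ⟨_, one_mem_adm K, rfl⟩⟩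

include hpos in
lemma philam_bddBelow (K : Set Ω) : BddBelow (φ '' adm K) :=
  ⟨0, by rintro x ⟨f, hf, rfl⟩; exact hpos f hf.1 hf.2.1⟩

include hpos in
lemma philam_nonneg (K : Set Ω) : 0 ≤ philam φ K :=
  le_csInf (philam_img_nonempty K) (by rintro x ⟨f, hf, rfl⟩; exact hpos f hf.1 hf.2.1)

include hpos in
lemma philam_le {K : Set Ω} {f : Ω → ℝ} (hf : f ∈ adm K) : philam φ K ≤ φ f :=
  csInf_le (philam_bddBelow hpos K) ⟨f, hf, rfl⟩

include hpos in
lemma philam_mono {K₁ K₂ : Set Ω} (h : K₁ ⊆ K₂) : philam φ K₁ ≤ philam φ K₂ := by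
  refine csInf_le_csInf (philam_bddBelow hpos K₁) (philam_img_nonempty K₂)
    (Set.image_mono ?_)
  rintro f ⟨h1, h2, h3⟩
  exact ⟨h1, h2, fun ω hω => h3 ω (h hω)⟩

include hadd hpos in
lemma phi_ind_le_philam {K : Set Ω} (hK : MeasurableSet K) :
    φ (K.indicator fun _ => (1:ℝ)) ≤ philam φ K := by
  refine le_csInf (philam_img_nonempty K) ?_
  rintro x ⟨f, ⟨hfB, hf0, hf1⟩, rfl⟩
  refine phi_mono hadd hpos (bb_indicator (bb_const 1) hK) hfB fun ω => ?_
  by_cases h : ω ∈ K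
  · rw [Set.indicator_of_mem h]; exact hf1 ω h
  · rw [Set.indicator_of_notMem h]; exact hf0 ω

include hadd hsmul hpos in
lemma phi_ind_const {A : Set Ω} (hA : MeasurableSet A) (c : ℝ) :
    φ (A.indicator fun _ => c) = c * φ (A.indicator fun _ => (1:ℝ)) := by
  have : A.indicator (fun _ => c) = c • A.indicator fun _ => (1:ℝ) := by
    funext ω; by_cases h : ω ∈ A <;> simp [Set.indicator, h]
  rw [this, hsmul c _ (bb_indicator (bb_const 1) hA)]

include hadd hpos in
lemma philam_union_le (K₁ K₂ : Set Ω) :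
    philam φ (K₁ ∪ K₂) ≤ philam φ K₁ + philam φ K₂ := by
  refine le_of_forall_pos_le_add fun ε hε => ?_
  obtain ⟨x₁, ⟨f₁, hf₁, rfl⟩, hx₁⟩ :=
    exists_lt_of_csInf_lt (philam_img_nonempty (φ := φ) K₁)
      (show philam φ K₁ < philam φ K₁ + ε / 2 by linarith)
  obtain ⟨x₂, ⟨f₂, hf₂, rfl⟩, hx₂⟩ :=
    exists_lt_of_csInf_lt (philam_img_nonempty (φ := φ) K₂)
      (show philam φ K₂ < philam φ K₂ + ε / 2 by linarith)
  have hsum : f₁ + f₂ ∈ adm (K₁ ∪ K₂) := by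
    refine ⟨bb_add hf₁.1 hf₂.1, fun ω => add_nonneg (hf₁.2.1 ω) (hf₂.2.1 ω), ?_⟩
    intro ω hω
    rcases hω with h | h
    · have := hf₁.2.2 ω h
      have := hf₂.2.1 ω
      simpa using by linarith
    · have := hf₂.2.2 ω h
      have := hf₁.2.1 ω
      simpa using by linarith
  calc philam φ (K₁ ∪ K₂) ≤ φ (f₁ + f₂) := philam_le hpos hsum
    _ = φ f₁ + φ f₂ := hadd _ hf₁.1 _ hf₂.1
    _ ≤ philam φ K₁ + philam φ K₂ + ε := by linarith

/-- The content associated with `φ`. -/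
noncomputable def philContent [T2Space Ω] (φ : (Ω → ℝ) → ℝ)
    (hadd : ∀ f ∈ Bb Ω, ∀ g ∈ Bb Ω, φ (f + g) = φ f + φ g)
    (hpos : ∀ f ∈ Bb Ω, (∀ ω, 0 ≤ f ω) → 0 ≤ φ f) : Content Ω where
  toFun K := ⟨philam φ K, philam_nonneg hpos K⟩
  mono' K₁ K₂ h := philam_mono hpos h
  sup_le' K₁ K₂ := by
    refine NNReal.coe_le_coe.mp ?_
    push_cast
    rw [TopologicalSpace.Compacts.coe_sup]
    exact philam_union_le hadd hpos _ _
  sup_disjoint' K₁ K₂ hdis _ _ := by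
    refine le_antisymm ?_ ?_
    · refine NNReal.coe_le_coe.mp ?_; push_cast
      rw [TopologicalSpace.Compacts.coe_sup]
      exact philam_union_le hadd hpos _ _
    · refine NNReal.coe_le_coe.mp ?_; push_cast
      obtain ⟨U, V, hUo, hVo, hK₁U, hK₂V, hUV⟩ :=
        SeparatedNhds.of_isCompact_isCompact K₁.isCompact K₂.isCompact hdis
      refine le_csInf (philam_img_nonempty _) ?_
      rintro x ⟨f, ⟨hfB, hf0, hf1⟩, rfl⟩
      have hK₂Uc : (K₂ : Set Ω) ⊆ Uᶜ := fun ω hω hU =>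
        hUV.le_bot ⟨hU, hK₂V hω⟩
      have h1 : U.indicator f ∈ adm (K₁ : Set Ω) := by
        refine ⟨bb_indicator hfB hUo.measurableSet,
          fun ω => Set.indicator_nonneg (fun a _ => hf0 a) ω, fun ω hω => ?_⟩
        rw [Set.indicator_of_mem (hK₁U hω)]
        exact hf1 ω (Set.mem_union_left _ hω)
      have h2 : Uᶜ.indicator f ∈ adm (K₂ : Set Ω) := by
        refine ⟨bb_indicator hfB hUo.measurableSet.compl,
          fun ω => Set.indicator_nonneg (fun a _ => hf0 a) ω, fun ω hω => ?_⟩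
        rw [Set.indicator_of_mem (hK₂Uc hω)]
        exact hf1 ω (Set.mem_union_right _ hω)
      have hre : φ f = φ (U.indicator f) + φ (Uᶜ.indicator f) := by
        rw [← hadd _ h1.1 _ h2.1, Set.indicator_self_add_compl U f]
      rw [hre]
      exact add_le_add (philam_le hpos h1) (philam_le hpos h2)

end phi

section meas

variable [T2Space Ω]
variable (hadd : ∀ f ∈ Bb Ω, ∀ g ∈ Bb Ω, φ (f + g) = φ f + φ g)
  (hpos : ∀ f ∈ Bb Ω, (∀ ω, 0 ≤ f ω) → 0 ≤ φ f)

lemma content_coe (K : TopologicalSpace.Compacts Ω) :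
    (philContent φ hadd hpos) K = ENNReal.ofReal (philam φ (K : Set Ω)) := by
  show ENNReal.ofNNReal (⟨philam φ (K : Set Ω), philam_nonneg hpos _⟩ : NNReal) = _
  exact (ENNReal.ofReal_coe_nnreal).symm

lemma meas_open_le {U : Set Ω} (hU : IsOpen U) :
    (philContent φ hadd hpos).measure U
      ≤ ENNReal.ofReal (φ (U.indicator fun _ => (1:ℝ))) := by
  rw [Content.measure_apply _ hU.measurableSet,
    Content.outerMeasure_of_isOpen _ U hU]
  refine iSup₂_le fun K hK => ?_
  rw [content_coe]
  refine ENNReal.ofReal_le_ofReal (philam_le hpos ?_)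
  refine ⟨bb_indicator (bb_const 1) hU.measurableSet,
    fun ω => Set.indicator_nonneg (fun a _ => zero_le_one) ω, fun ω hω => ?_⟩
  rw [Set.indicator_of_mem (show ω ∈ U from hK hω)]

lemma philam_le_meas {C : Set Ω} (hC : IsCompact C) :
    ENNReal.ofReal (philam φ C) ≤ (philContent φ hadd hpos).measure C := by
  rw [Content.measure_apply _ hC.isClosed.measurableSet]
  have := (philContent φ hadd hpos).le_outerMeasure_compacts ⟨C, hC⟩
  rwa [content_coe] at this

lemma phi_ind_le_meas {C : Set Ω} (hC : IsCompact C) :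
    ENNReal.ofReal (φ (C.indicator fun _ => (1:ℝ)))
      ≤ (philContent φ hadd hpos).measure C :=
  le_trans (ENNReal.ofReal_le_ofReal
      (phi_ind_le_philam hadd hpos hC.isClosed.measurableSet))
    (philam_le_meas hadd hpos hC)

lemma meas_univ_le :
    (philContent φ hadd hpos).measure Set.univ ≤ ENNReal.ofReal (φ fun _ => (1:ℝ)) := by
  rw [Content.measure_apply _ MeasurableSet.univ,
    Content.outerMeasure_of_isOpen _ Set.univ isOpen_univ]
  refine iSup₂_le fun K _ => ?_
  rw [content_coe]
  exact ENNReal.ofReal_le_ofReal (philam_le hpos (one_mem_adm _))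

end meas

lemma sum_ite_lt {x h : ℝ} (hh : 0 < h) (hx : 0 ≤ x) {N : ℕ} (hxN : x ≤ N * h) :
    (∑ i ∈ Finset.range (N+1), if ((i:ℕ):ℝ)*h < x then h else 0) = (⌈x/h⌉₊:ℝ) * h := by
  classical
  rw [Finset.sum_ite, Finset.sum_const, Finset.sum_const_zero, add_zero, nsmul_eq_mul]
  have hceil : ⌈x/h⌉₊ ≤ N := Nat.ceil_le.mpr ((div_le_iff₀ hh).mpr hxN)
  have hfilter : (Finset.range (N+1)).filter (fun i : ℕ => ((i:ℕ):ℝ)*h < x)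
      = Finset.range ⌈x/h⌉₊ := by
    ext i
    simp only [Finset.mem_filter, Finset.mem_range]
    constructor
    · rintro ⟨-, hi⟩
      exact Nat.lt_ceil.mpr ((lt_div_iff₀ hh).mpr hi)
    · intro hi
      exact ⟨lt_of_lt_of_le hi (hceil.trans (Nat.le_succ N)),
        (lt_div_iff₀ hh).mp (Nat.lt_ceil.mp hi)⟩
  rw [hfilter, Finset.card_range]

lemma sum_ite_le {x h : ℝ} (hh : 0 < h) (hx : 0 ≤ x) {N : ℕ} (hxN : x ≤ N * h) :
    (∑ i ∈ Finset.range N, if (((i:ℕ):ℝ)+1)*h ≤ x then h else 0) = (⌊x/h⌋₊:ℝ) * h := by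
  classical
  rw [Finset.sum_ite, Finset.sum_const, Finset.sum_const_zero, add_zero, nsmul_eq_mul]
  have hfloor : ⌊x/h⌋₊ ≤ N := by
    have : ⌊x/h⌋₊ ≤ ⌊(N:ℝ)⌋₊ := Nat.floor_le_floor ((div_le_iff₀ hh).mpr hxN)
    simpa [Nat.floor_natCast] using this
  have hfilter : (Finset.range N).filter (fun i : ℕ => (((i:ℕ):ℝ)+1)*h ≤ x)
      = Finset.range ⌊x/h⌋₊ := by
    ext i
    simp only [Finset.mem_filter, Finset.mem_range]
    constructor
    · rintro ⟨-, hi⟩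
      have : ((i+1 : ℕ):ℝ) ≤ x/h := by
        push_cast
        exact (le_div_iff₀ hh).mpr hi
      have := (Nat.le_floor_iff (div_nonneg hx hh.le)).mpr this
      omega
    · intro hi
      have h1 : i + 1 ≤ ⌊x/h⌋₊ := hi
      have h2 : ((i+1:ℕ):ℝ) ≤ x/h := by
        refine le_trans ?_ (Nat.floor_le (div_nonneg hx hh.le))
        exact_mod_cast h1
      refine ⟨lt_of_lt_of_le hi hfloor, ?_⟩
      rw [← le_div_iff₀ hh]
      push_cast at h2 ⊢
      exact h2
  rw [hfilter, Finset.card_range]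

lemma real_le_of_forall_pos_le_add {a b : ℝ} (h : ∀ ε : ℝ, 0 < ε → a ≤ b + ε) : a ≤ b := by
  by_contra hc
  push_neg at hc
  have := h ((a - b)/2) (by linarith)
  linarith

end Stmt12Aux

open Stmt12Aux ENNReal

/-- Corollary 1.7, first part: a positive linear functional on B_b satisfying (C) is
represented on C_b by a regular finite Borel measure. -/
theorem stmt12 [T2Space Ω] (φ : (Ω → ℝ) → ℝ)
    (hadd : ∀ f ∈ Bb Ω, ∀ g ∈ Bb Ω, φ (f + g) = φ f + φ g)
    (hsmul : ∀ c : ℝ, ∀ f ∈ Bb Ω, φ (c • f) = c * φ f)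
    (hpos : ∀ f ∈ Bb Ω, (∀ ω, 0 ≤ f ω) → 0 ≤ φ f)
    (hC : CondCR φ) :
    ∃ μ ∈ caReg Ω, ∀ f ∈ Cb Ω, φ f = ∫ ω, f ω ∂μ := by
  classical
  obtain ⟨K, hKc, hKstep, hKcond⟩ := hC
  have hKmono : Monotone K := monotone_nat_of_le_succ hKstep
  set μ : Measure Ω := (philContent φ hadd hpos).measure with hμdef
  have hone : (fun _ : Ω => (1:ℝ)) ∈ Bb Ω := bb_const 1
  have hphi1 : 0 ≤ φ (fun _ => (1:ℝ)) := hpos _ hone fun _ => zero_le_one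
  have hKnm : ∀ n, MeasurableSet (K n) := fun n => (hKc n).isClosed.measurableSet
  -- convergence via condition (C)
  have key_tendsto : ∀ f : Ω → ℝ, f ∈ Bb Ω → (∀ ω, 0 ≤ f ω) →
      Tendsto (fun n => φ ((K n).indicator f)) atTop (𝓝 (φ f)) := by
    intro f hf hf0
    refine (hKcond (fun n => (K n).indicator f) f
      (fun n => bb_indicator hf (hKnm n)) hf ?_ ?_).2
    · intro n ω
      show (K n).indicator f ω ≤ (K (n+1)).indicator f ω
      by_cases h : ω ∈ K n
      · rw [Set.indicator_of_mem h, Set.indicator_of_mem (hKstep n h)]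
      · rw [Set.indicator_of_notMem h]
        exact Set.indicator_nonneg (fun a _ => hf0 a) ω
    · intro m n hmn ω hω
      exact Set.indicator_of_mem (hKmono hmn hω) f
  have tight : Tendsto (fun n => φ ((K n).indicator fun _ => (1:ℝ))) atTop
      (𝓝 (φ fun _ => (1:ℝ))) := key_tendsto _ hone fun _ => zero_le_one
  have hμK : ∀ n, ENNReal.ofReal (φ ((K n).indicator fun _ => (1:ℝ))) ≤ μ (K n) :=
    fun n => phi_ind_le_meas hadd hpos (hKc n)
  have hμuniv : μ Set.univ = ENNReal.ofReal (φ fun _ => (1:ℝ)) := by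
    refine le_antisymm (meas_univ_le hadd hpos) ?_
    have h2 : Tendsto (fun n => ENNReal.ofReal (φ ((K n).indicator fun _ => (1:ℝ))))
        atTop (𝓝 (ENNReal.ofReal (φ fun _ => (1:ℝ)))) :=
      (ENNReal.continuous_ofReal.tendsto _).comp tight
    exact le_of_tendsto' h2 fun n =>
      le_trans (hμK n) (measure_mono (Set.subset_univ _))
  have hμfin : IsFiniteMeasure μ := ⟨by rw [hμuniv]; exact ENNReal.ofReal_lt_top⟩
  -- tightness of the measure
  have hcompl : ∀ ε : ℝ≥0∞, 0 < ε → ∃ n, μ (K n)ᶜ ≤ ε := by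
    intro ε hε
    obtain ⟨r, hr0, hrε⟩ : ∃ r : ℝ, 0 < r ∧ ENNReal.ofReal r ≤ ε := by
      rcases eq_or_ne ε ⊤ with rfl | hεtop
      · exact ⟨1, one_pos, le_top⟩
      · refine ⟨ε.toReal, ENNReal.toReal_pos hε.ne' hεtop, ?_⟩
        rw [ENNReal.ofReal_toReal hεtop]
    obtain ⟨n, hn⟩ := (tight.eventually (eventually_gt_nhds
      (show φ (fun _ => (1:ℝ)) - r < φ (fun _ => (1:ℝ)) by linarith))).exists
    refine ⟨n, le_trans ?_ hrε⟩
    rw [measure_compl (hKnm n) (measure_ne_top μ _), tsub_le_iff_right]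
    have hind0 : 0 ≤ φ ((K n).indicator fun _ => (1:ℝ)) :=
      hpos _ (bb_indicator (bb_const 1) (hKnm n))
        fun ω => Set.indicator_nonneg (fun a _ => zero_le_one) ω
    calc μ Set.univ = ENNReal.ofReal (φ fun _ => (1:ℝ)) := hμuniv
      _ ≤ ENNReal.ofReal (r + φ ((K n).indicator fun _ => (1:ℝ))) :=
          ENNReal.ofReal_le_ofReal (by linarith)
      _ = ENNReal.ofReal r + ENNReal.ofReal (φ ((K n).indicator fun _ => (1:ℝ))) :=
          ENNReal.ofReal_add hr0.le hind0
      _ ≤ ENNReal.ofReal r + μ (K n) := by gcongr; exact hμK n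
  -- regularity
  have hreg : ∀ A : Set Ω, MeasurableSet A →
      μ A = ⨆ B ∈ {B : Set Ω | MeasurableSet B ∧ IsClosed B ∧ IsCompact B ∧ B ⊆ A}, μ B := by
    intro A hA
    refine le_antisymm ?_ (iSup₂_le fun B hB => measure_mono hB.2.2.2)
    refine ENNReal.le_of_forall_pos_le_add fun ε hε hfin => ?_
    set δ : ℝ≥0∞ := (ε : ℝ≥0∞) / 2 with hδdef
    have hδ0 : δ ≠ 0 := (ENNReal.half_pos (by exact_mod_cast hε.ne')).ne'
    obtain ⟨U, hAU, hUo, hUlt⟩ :=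
      Set.exists_isOpen_lt_add Aᶜ (measure_ne_top μ Aᶜ) hδ0
    have h1 : μ A ≤ μ Uᶜ + δ := by
      have hc : μ A + μ U ≤ (μ Uᶜ + δ) + μ U := by
        calc μ A + μ U ≤ μ A + (μ Aᶜ + δ) := add_le_add_right hUlt.le _
          _ = (μ A + μ Aᶜ) + δ := by ring
          _ = μ Set.univ + δ := by rw [measure_add_measure_compl hA]
          _ ≤ (μ Uᶜ + μ U) + δ := by
              gcongr
              calc μ Set.univ = μ (Uᶜ ∪ U) := by rw [Set.compl_union_self]
                _ ≤ μ Uᶜ + μ U := measure_union_le _ _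
          _ = (μ Uᶜ + δ) + μ U := by ring
      exact (ENNReal.add_le_add_iff_right (measure_ne_top μ U)).mp hc
    obtain ⟨n, hn⟩ := hcompl δ (pos_iff_ne_zero.mpr hδ0)
    have h2 : μ Uᶜ ≤ μ (Uᶜ ∩ K n) + δ := by
      calc μ Uᶜ ≤ μ ((Uᶜ ∩ K n) ∪ (K n)ᶜ) := by
            refine measure_mono fun ω hω => ?_
            by_cases hk : ω ∈ K n
            · exact Or.inl ⟨hω, hk⟩
            · exact Or.inr hk
        _ ≤ μ (Uᶜ ∩ K n) + μ (K n)ᶜ := measure_union_le _ _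
        _ ≤ μ (Uᶜ ∩ K n) + δ := by gcongr
    have hBmem : Uᶜ ∩ K n ∈ {B : Set Ω | MeasurableSet B ∧ IsClosed B ∧ IsCompact B ∧ B ⊆ A} := by
      refine ⟨(hUo.isClosed_compl.inter (hKc n).isClosed).measurableSet,
        hUo.isClosed_compl.inter (hKc n).isClosed,
        (hKc n).inter_left hUo.isClosed_compl,
        fun ω hω => ?_⟩
      exact (Set.compl_subset_comm.mp hAU) hω.1
    calc μ A ≤ μ Uᶜ + δ := h1
      _ ≤ (μ (Uᶜ ∩ K n) + δ) + δ := by gcongr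
      _ = μ (Uᶜ ∩ K n) + (ε : ℝ≥0∞) := by
          rw [add_assoc, hδdef, ENNReal.add_halves]
      _ ≤ (⨆ B ∈ {B : Set Ω | MeasurableSet B ∧ IsClosed B ∧ IsCompact B ∧ B ⊆ A}, μ B)
            + (ε : ℝ≥0∞) := by
          gcongr
          exact le_iSup₂ (f := fun B (_ : B ∈ {B : Set Ω | MeasurableSet B ∧ IsClosed B ∧
            IsCompact B ∧ B ⊆ A}) => μ B) _ hBmem
  haveI := hμfin
  have phi_one_eq : (μ Set.univ).toReal = φ (fun _ => (1:ℝ)) := by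
    rw [hμuniv, ENNReal.toReal_ofReal hphi1]
  have phi_const : ∀ c : ℝ, φ (fun _ : Ω => c) = c * φ (fun _ => (1:ℝ)) := by
    intro c
    have : (fun _ : Ω => c) = c • (fun _ : Ω => (1:ℝ)) := by funext; simp
    rw [this, hsmul c _ (bb_const 1)]
  have ind_le_meas_toReal : ∀ (C : Set Ω), IsCompact C →
      φ (C.indicator fun _ => (1:ℝ)) ≤ (μ C).toReal := by
    intro C hCcomp
    have h1 := phi_ind_le_meas (φ := φ) hadd hpos hCcomp
    have h0 : 0 ≤ φ (C.indicator fun _ => (1:ℝ)) :=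
      hpos _ (bb_indicator (bb_const 1) hCcomp.isClosed.measurableSet)
        fun ω => Set.indicator_nonneg (fun a _ => zero_le_one) ω
    have := ENNReal.toReal_mono (measure_ne_top μ C) h1
    rwa [ENNReal.toReal_ofReal h0] at this
  have meas_toReal_le_ind : ∀ (U : Set Ω), IsOpen U →
      (μ U).toReal ≤ φ (U.indicator fun _ => (1:ℝ)) := by
    intro U hUo
    have h1 := meas_open_le (φ := φ) hadd hpos hUo
    have h0 : 0 ≤ φ (U.indicator fun _ => (1:ℝ)) :=
      hpos _ (bb_indicator (bb_const 1) hUo.measurableSet)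
        fun ω => Set.indicator_nonneg (fun a _ => zero_le_one) ω
    have := ENNReal.toReal_mono ENNReal.ofReal_ne_top h1
    rwa [ENNReal.toReal_ofReal h0] at this
  -- main claim for nonnegative bounded continuous functions
  have main : ∀ (g : Ω → ℝ) (M : ℝ), Continuous g → (∀ ω, 0 ≤ g ω) → (∀ ω, g ω ≤ M) →
      φ g = ∫ ω, g ω ∂μ := by
    intro g M hgc hg0 hgM
    have hgB : g ∈ Bb Ω := ⟨hgc.measurable, max M 0, fun ω =>
      abs_le.mpr ⟨by have := hg0 ω; have := le_max_right M 0; linarith,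
        (hgM ω).trans (le_max_left M 0)⟩⟩
    have hgint : Integrable g μ := by
      refine Integrable.mono' (integrable_const (max M 0))
        hgc.measurable.aestronglyMeasurable (ae_of_all _ fun ω => ?_)
      rw [Real.norm_eq_abs]
      exact abs_le.mpr ⟨by have := hg0 ω; have := le_max_right M 0; linarith,
        (hgM ω).trans (le_max_left M 0)⟩
    -- upper estimate : ∫ g ≤ φ g + h φ 1
    have upper : ∀ h : ℝ, 0 < h → ∫ ω, g ω ∂μ ≤ φ g + h * φ (fun _ => (1:ℝ)) := by
      intro h hh
      set N := ⌈M/h⌉₊ with hNdef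
      have hMN : M ≤ N * h := by
        have h1 : M / h ≤ (N:ℝ) := Nat.le_ceil (M/h)
        calc M = (M/h)*h := by field_simp
          _ ≤ (N:ℝ) * h := mul_le_mul_of_nonneg_right h1 hh.le
      set U : ℕ → Set Ω := fun i => {ω | (i:ℝ)*h < g ω} with hUdef
      have hUo : ∀ i, IsOpen (U i) := fun i => isOpen_lt continuous_const hgc
      have hUm : ∀ i, MeasurableSet (U i) := fun i => (hUo i).measurableSet
      set F : Ω → ℝ := fun ω => ∑ i ∈ Finset.range (N+1), (U i).indicator (fun _ => h) ω
        with hFdef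
      have hFval : ∀ ω, F ω = (⌈g ω/h⌉₊:ℝ) * h := by
        intro ω
        have e : F ω = ∑ i ∈ Finset.range (N+1), if ((i:ℕ):ℝ)*h < g ω then h else 0 := by
          refine Finset.sum_congr rfl fun i _ => ?_
          by_cases hlt : ((i:ℕ):ℝ)*h < g ω
          · rw [Set.indicator_of_mem (show ω ∈ U i from hlt), if_pos hlt]
          · rw [Set.indicator_of_notMem (show ω ∉ U i from hlt), if_neg hlt]
        rw [e, sum_ite_lt hh (hg0 ω) ((hgM ω).trans hMN)]
      have claim1 : ∀ ω, g ω ≤ F ω := fun ω => by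
        rw [hFval ω]
        calc g ω = (g ω / h) * h := by field_simp
          _ ≤ (⌈g ω/h⌉₊:ℝ) * h := mul_le_mul_of_nonneg_right (Nat.le_ceil _) hh.le
      have claim2 : ∀ ω, F ω ≤ g ω + h := fun ω => by
        rw [hFval ω]
        have h1 : (⌈g ω/h⌉₊:ℝ) ≤ g ω / h + 1 :=
          (Nat.ceil_lt_add_one (div_nonneg (hg0 ω) hh.le)).le
        calc (⌈g ω/h⌉₊:ℝ) * h ≤ (g ω / h + 1) * h := mul_le_mul_of_nonneg_right h1 hh.le
          _ = g ω + h := by field_simp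
      have hIind : ∀ i, Integrable ((U i).indicator (fun _ => h)) μ :=
        fun i => (integrable_const h).indicator (hUm i)
      have hFint : Integrable F μ := integrable_finset_sum _ fun i _ => hIind i
      have step2 : ∫ ω, F ω ∂μ = ∑ i ∈ Finset.range (N+1), (μ (U i)).toReal * h := by
        rw [hFdef, integral_finset_sum _ fun i _ => hIind i]
        exact Finset.sum_congr rfl fun i _ => by
          rw [integral_indicator_const h (hUm i), smul_eq_mul, measureReal_def]
      have hFsum : F = ∑ i ∈ Finset.range (N+1), (U i).indicator fun _ => h := by
        funext ω; rw [Finset.sum_apply]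
      have hindB : ∀ i, ((U i).indicator fun _:Ω => h) ∈ Bb Ω :=
        fun i => bb_indicator (bb_const h) (hUm i)
      have hFB : F ∈ Bb Ω := by rw [hFsum]; exact bb_sum _ _ fun i _ => hindB i
      have step4 : ∑ i ∈ Finset.range (N+1), (μ (U i)).toReal * h ≤ φ F := by
        rw [hFsum, phi_sum hadd hsmul _ _ fun i _ => hindB i]
        refine Finset.sum_le_sum fun i _ => ?_
        rw [phi_ind_const hadd hsmul hpos (hUm i) h]
        calc (μ (U i)).toReal * h ≤ φ ((U i).indicator fun _ => (1:ℝ)) * h :=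
              mul_le_mul_of_nonneg_right (meas_toReal_le_ind (U i) (hUo i)) hh.le
          _ = h * φ ((U i).indicator fun _ => (1:ℝ)) := mul_comm _ _
      have step5 : φ F ≤ φ g + h * φ (fun _ => (1:ℝ)) := by
        have h1 : φ F ≤ φ (g + fun _ => h) :=
          phi_mono hadd hpos hFB (bb_add hgB (bb_const h))
            fun ω => by simpa using claim2 ω
        rwa [hadd g hgB _ (bb_const h), phi_const h] at h1
      calc ∫ ω, g ω ∂μ ≤ ∫ ω, F ω ∂μ := integral_mono hgint hFint claim1
        _ = ∑ i ∈ Finset.range (N+1), (μ (U i)).toReal * h := step2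
        _ ≤ φ F := step4
        _ ≤ φ g + h * φ (fun _ => (1:ℝ)) := step5
    -- lower estimate : φ g ≤ ∫ g + h φ 1
    have lower : ∀ h : ℝ, 0 < h → φ g ≤ (∫ ω, g ω ∂μ) + h * φ (fun _ => (1:ℝ)) := by
      intro h hh
      set N := ⌈M/h⌉₊ with hNdef
      have hMN : M ≤ N * h := by
        have h1 : M / h ≤ (N:ℝ) := Nat.le_ceil (M/h)
        calc M = (M/h)*h := by field_simp
          _ ≤ (N:ℝ) * h := mul_le_mul_of_nonneg_right h1 hh.le
      have step : ∀ n, φ ((K n).indicator g) ≤ (∫ ω, g ω ∂μ) + h * φ (fun _ => (1:ℝ)) := by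
        intro n
        set C : ℕ → Set Ω := fun i => K n ∩ {ω | ((i:ℝ)+1)*h ≤ g ω} with hCdef
        have hCc : ∀ i, IsCompact (C i) :=
          fun i => (hKc n).inter_right (isClosed_le continuous_const hgc)
        have hCm : ∀ i, MeasurableSet (C i) := fun i => (hCc i).isClosed.measurableSet
        have hsum_val : ∀ ω ∈ K n,
            (∑ i ∈ Finset.range N, (C i).indicator (fun _ => h) ω)
              = (⌊g ω / h⌋₊ : ℝ) * h := by
          intro ω hω
          have e : ∀ i, (C i).indicator (fun _ => h) ω
              = if (((i:ℕ):ℝ)+1)*h ≤ g ω then h else 0 := by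
            intro i
            by_cases hle : ((i:ℝ)+1)*h ≤ g ω
            · rw [Set.indicator_of_mem (show ω ∈ C i from ⟨hω, hle⟩), if_pos hle]
            · rw [Set.indicator_of_notMem (fun hmem => hle (show ((((i:ℕ)):ℝ)+1)*h ≤ g ω from hmem.2)), if_neg hle]
          rw [Finset.sum_congr rfl fun i _ => e i,
            sum_ite_le hh (hg0 ω) ((hgM ω).trans hMN)]
        have hsum_zero : ∀ ω, ω ∉ K n →
            (∑ i ∈ Finset.range N, (C i).indicator (fun _ => h) ω) = 0 :=
          fun ω hω => Finset.sum_eq_zero fun i _ =>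
            Set.indicator_of_notMem (fun hmem => hω hmem.1) _
        set F : Ω → ℝ := fun ω =>
          (∑ i ∈ Finset.range N, (C i).indicator (fun _ => h) ω)
            + (K n).indicator (fun _ => h) ω with hFdef
        have claim1 : ∀ ω, (K n).indicator g ω ≤ F ω := by
          intro ω
          by_cases hω : ω ∈ K n
          · rw [Set.indicator_of_mem hω]
            have eF : F ω = (⌊g ω / h⌋₊ : ℝ) * h + h := by
              rw [hFdef]
              simp only
              rw [hsum_val ω hω, Set.indicator_of_mem hω]
            rw [eF]
            have h1 : g ω / h ≤ (⌊g ω / h⌋₊:ℝ) + 1 := (Nat.lt_floor_add_one _).le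
            calc g ω = (g ω / h) * h := by field_simp
              _ ≤ ((⌊g ω / h⌋₊:ℝ) + 1) * h := mul_le_mul_of_nonneg_right h1 hh.le
              _ = (⌊g ω / h⌋₊:ℝ) * h + h := by ring
          · rw [Set.indicator_of_notMem hω]
            have eF : F ω = 0 := by
              rw [hFdef]
              simp only
              rw [hsum_zero ω hω, Set.indicator_of_notMem hω, add_zero]
            rw [eF]
        have claim2 : ∀ ω, (∑ i ∈ Finset.range N, (C i).indicator (fun _ => h) ω) ≤ g ω := by
          intro ω
          by_cases hω : ω ∈ K n
          · rw [hsum_val ω hω]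
            calc (⌊g ω / h⌋₊:ℝ) * h ≤ (g ω / h) * h :=
                  mul_le_mul_of_nonneg_right
                    (Nat.floor_le (div_nonneg (hg0 ω) hh.le)) hh.le
              _ = g ω := by field_simp
          · rw [hsum_zero ω hω]; exact hg0 ω
        have hindB : ∀ i, ((C i).indicator fun _:Ω => h) ∈ Bb Ω :=
          fun i => bb_indicator (bb_const h) (hCm i)
        have hSB : (∑ i ∈ Finset.range N, (C i).indicator fun _:Ω => h) ∈ Bb Ω :=
          bb_sum _ _ fun i _ => hindB i
        have hFeq : F = (∑ i ∈ Finset.range N, (C i).indicator fun _:Ω => h)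
            + (K n).indicator fun _:Ω => h := by
          funext ω; rw [hFdef]; simp only [Pi.add_apply, Finset.sum_apply]
        have hFB : F ∈ Bb Ω := by
          rw [hFeq]; exact bb_add hSB (bb_indicator (bb_const h) (hKnm n))
        have e0 : φ F = (∑ i ∈ Finset.range N, φ ((C i).indicator fun _:Ω => h))
            + φ ((K n).indicator fun _:Ω => h) := by
          rw [hFeq, hadd _ hSB _ (bb_indicator (bb_const h) (hKnm n)),
            phi_sum hadd hsmul _ _ fun i _ => hindB i]
        have hIind : ∀ i, Integrable ((C i).indicator (fun _ => h)) μ :=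
          fun i => (integrable_const h).indicator (hCm i)
        have hSint : Integrable
            (fun ω => ∑ i ∈ Finset.range N, (C i).indicator (fun _ => h) ω) μ :=
          integrable_finset_sum _ fun i _ => hIind i
        have e1 : (∑ i ∈ Finset.range N, φ ((C i).indicator fun _:Ω => h))
            ≤ ∫ ω, g ω ∂μ := by
          have e1a : (∑ i ∈ Finset.range N, φ ((C i).indicator fun _:Ω => h))
              ≤ ∑ i ∈ Finset.range N, (μ (C i)).toReal * h := by
            refine Finset.sum_le_sum fun i _ => ?_
            rw [phi_ind_const hadd hsmul hpos (hCm i) h]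
            calc h * φ ((C i).indicator fun _ => (1:ℝ))
                ≤ h * (μ (C i)).toReal :=
                  mul_le_mul_of_nonneg_left (ind_le_meas_toReal (C i) (hCc i)) hh.le
              _ = (μ (C i)).toReal * h := mul_comm _ _
          have e1b : ∑ i ∈ Finset.range N, (μ (C i)).toReal * h
              = ∫ ω, (∑ i ∈ Finset.range N, (C i).indicator (fun _ => h) ω) ∂μ := by
            rw [integral_finset_sum _ fun i _ => hIind i]
            exact (Finset.sum_congr rfl fun i _ => by
              rw [integral_indicator_const h (hCm i), smul_eq_mul, measureReal_def]).symm
          have e1c : ∫ ω, (∑ i ∈ Finset.range N, (C i).indicator (fun _ => h) ω) ∂μ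
              ≤ ∫ ω, g ω ∂μ := integral_mono hSint hgint claim2
          linarith
        have e2 : φ ((K n).indicator fun _:Ω => h) ≤ h * φ (fun _ => (1:ℝ)) := by
          rw [phi_ind_const hadd hsmul hpos (hKnm n) h]
          refine mul_le_mul_of_nonneg_left ?_ hh.le
          refine phi_mono hadd hpos (bb_indicator (bb_const 1) (hKnm n)) hone fun ω => ?_
          by_cases hω : ω ∈ K n
          · rw [Set.indicator_of_mem hω]
          · rw [Set.indicator_of_notMem hω]; exact zero_le_one
        calc φ ((K n).indicator g)
            ≤ φ F := phi_mono hadd hpos (bb_indicator hgB (hKnm n)) hFB claim1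
          _ = (∑ i ∈ Finset.range N, φ ((C i).indicator fun _:Ω => h))
              + φ ((K n).indicator fun _:Ω => h) := e0
          _ ≤ (∫ ω, g ω ∂μ) + h * φ (fun _ => (1:ℝ)) := add_le_add e1 e2
      exact le_of_tendsto (key_tendsto g hgB hg0) (Eventually.of_forall step)
    -- combine
    have h1 : ∫ ω, g ω ∂μ ≤ φ g := by
      refine real_le_of_forall_pos_le_add fun ε hε => ?_
      set h := ε / (φ (fun _ => (1:ℝ)) + 1) with hhdef
      have hh : 0 < h := div_pos hε (by linarith)
      have hmul : h * (φ (fun _ => (1:ℝ)) + 1) = ε :=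
        div_mul_cancel₀ _ (by linarith)
      have := upper h hh
      nlinarith
    have h2 : φ g ≤ ∫ ω, g ω ∂μ := by
      refine real_le_of_forall_pos_le_add fun ε hε => ?_
      set h := ε / (φ (fun _ => (1:ℝ)) + 1) with hhdef
      have hh : 0 < h := div_pos hε (by linarith)
      have hmul : h * (φ (fun _ => (1:ℝ)) + 1) = ε :=
        div_mul_cancel₀ _ (by linarith)
      have := lower h hh
      nlinarith
    linarith
  -- conclusion
  refine ⟨μ, ⟨hμfin, hreg⟩, ?_⟩
  intro f hf
  obtain ⟨hfc, M₀, hM₀⟩ := hf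
  have hfB : f ∈ Bb Ω := ⟨hfc.measurable, M₀, hM₀⟩
  have hg0 : ∀ ω, 0 ≤ (f + (fun _ : Ω => M₀)) ω := fun ω => by
    have := abs_le.mp (hM₀ ω); simp only [Pi.add_apply]; linarith [this.1]
  have hgM : ∀ ω, (f + (fun _ : Ω => M₀)) ω ≤ M₀ + M₀ := fun ω => by
    have := abs_le.mp (hM₀ ω); simp only [Pi.add_apply]; linarith [this.2]
  have hmain := main (f + (fun _ : Ω => M₀)) (M₀ + M₀) (hfc.add continuous_const) hg0 hgM
  have hφg : φ (f + (fun _ : Ω => M₀)) = φ f + M₀ * φ (fun _ => (1:ℝ)) := by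
    rw [hadd f hfB _ (bb_const M₀), phi_const M₀]
  have hIf : Integrable f μ := by
    refine Integrable.mono' (integrable_const M₀)
      hfc.measurable.aestronglyMeasurable (ae_of_all _ fun ω => ?_)
    rw [Real.norm_eq_abs]; exact hM₀ ω
  have hInteq : ∫ ω, (f + (fun _ : Ω => M₀)) ω ∂μ
      = (∫ ω, f ω ∂μ) + M₀ * φ (fun _ => (1:ℝ)) := by
    have e : ∫ ω, (f + (fun _ : Ω => M₀)) ω ∂μ = ∫ ω, (f ω + M₀) ∂μ := rfl
    rw [e, integral_add hIf (integrable_const M₀), integral_const, smul_eq_mul, measureReal_def,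
      phi_one_eq, mul_comm]
  linarith
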